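/- arXiv:2205.09686 — 2 statements merged into one kernel-verified Lean document; each statement's English description precedes it below -/
import Mathlib

section
/- For every fixed integer k ≥ 1, the generating function of the Motzkin ballot numbers satisfies Σ_{n ≥ k-1} T_{n,k} x^n = (1 + x·m(x))^{k-1}·x^{k-1}, where m(x) = Σ_{n≥0} M_n x^n. -/
/-- A Dyck path of semilength `n`, encoded as a word on `Bool`
(`true` = up step `u`, `false` = down step `d`). -/
def IsDyckWord (n : ℕ) (w : List Bool) : Prop :=
  w.length = 2 * n ∧ w.count true = n ∧ w.count false = n ∧
    ∀ p : List Bool, p <+: w → p.count false ≤ p.count true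

/-- The (0-based) indices of the up steps of `w`. -/
def upIdxs (w : List Bool) : List ℕ := w.findIdxs (· == true)

/-- The (0-based) indices of the down steps of `w`. -/
def downIdxs (w : List Bool) : List ℕ := w.findIdxs (· == false)

/-- `rStat w i` is the number of `d`'s strictly between the `i`-th and the
`(i+1)`-st `u` of `w` (with `i` 1-indexed). -/
def rStat (w : List Bool) (i : ℕ) : ℕ :=
  ((w.take ((upIdxs w).getD i 0)).drop ((upIdxs w).getD (i - 1) 0 + 1)).count false

/-- `sStat w i` is the number of `u`'s strictly between the `i`-th and the
`(i+1)`-st `d` of `w` (with `i` 1-indexed). -/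
def sStat (w : List Bool) (i : ℕ) : ℕ :=
  ((w.take ((downIdxs w).getD i 0)).drop ((downIdxs w).getD (i - 1) 0 + 1)).count true

/-- The statistic `L(D) = ∏_{i=1}^{n-1} C(r_i + s_i, r_i)` of a Dyck path of semilength `n`. -/
def LStat (n : ℕ) (w : List Bool) : ℕ :=
  ∏ i ∈ Finset.Icc 1 (n - 1), Nat.choose (rStat w i + sStat w i) (rStat w i)

/-- `dyckL n k` = the set `𝒟ₙᵏ` of Dyck paths of semilength `n` with `L(D) = k`. -/
def dyckL (n k : ℕ) : Set (List Bool) := {w | IsDyckWord n w ∧ LStat n w = k}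

/-- A Motzkin path, encoded as a word on `Option Bool`
(`some true` = up, `some false` = down, `none` = horizontal). -/
def IsMotzkinWord (w : List (Option Bool)) : Prop :=
  w.count (some false) = w.count (some true) ∧
    ∀ p : List (Option Bool), p <+: w → p.count (some false) ≤ p.count (some true)

/-- `motzkin n` = the `n`-th Motzkin number `Mₙ`, the number of Motzkin paths of length `n`. -/
noncomputable def motzkin (n : ℕ) : ℕ :=
  {w : List (Option Bool) | w.length = n ∧ IsMotzkinWord w}.ncard

/-- The Motzkin ballot number `T_{n,k}`: the number of Motzkin paths of length `n`
whose first down step is in position `k` (1-indexed); by convention `T_{k-1,k} = 1`,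
counting the path of `k-1` horizontal steps. -/
noncomputable def motzkinBallot (n k : ℕ) : ℕ :=
  if n + 1 = k then 1
  else
    {w : List (Option Bool) | w.length = n ∧ IsMotzkinWord w ∧
      w.getD (k - 1) none = some false ∧ ∀ j < k - 1, w.getD j none ≠ some false}.ncard

/-- Motzkin numbers with integer index: `Mᵢ = 0` for `i < 0`. -/
noncomputable def motzkinZ (i : ℤ) : ℤ := if 0 ≤ i then (motzkin i.toNat : ℤ) else 0

/-- Motzkin ballot numbers with integer first index: `T_{n,k} = 0` for `n < 0`. -/
noncomputable def motzkinBallotZ (n : ℤ) (k : ℕ) : ℤ :=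
  if 0 ≤ n then (motzkinBallot n.toNat k : ℤ) else 0

/-- The set of returns of a Dyck path `w` of semilength `n`:
indices `1 ≤ k ≤ n` such that the path touches the `x`-axis after `2k` steps. -/
def returns (n : ℕ) (w : List Bool) : Finset ℕ :=
  (Finset.Icc 1 n).filter fun k => (w.take (2 * k)).count false = (w.take (2 * k)).count true

/-- `dyckRS n r s` = the set `𝒟ₙ^{r,s}` of Dyck paths of semilength `n` having exactly one
index `i` with `rᵢ > 0` and `sᵢ > 0`, and such that at that index `rᵢ = r` and `sᵢ = s`. -/
def dyckRS (n r s : ℕ) : Set (List Bool) :=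
  {w | IsDyckWord n w ∧ ∃ i ∈ Finset.Icc 1 (n - 1),
    (0 < rStat w i ∧ 0 < sStat w i) ∧ rStat w i = r ∧ sStat w i = s ∧
      ∀ j ∈ Finset.Icc 1 (n - 1), 0 < rStat w j ∧ 0 < sStat w j → j = i}

/-- `twoStars n w k₁ k₂` says that `k₁ < k₂` are exactly the two indices `i` of `w`
with `rᵢ > 0` and `sᵢ > 0`. -/
def twoStars (n : ℕ) (w : List Bool) (k₁ k₂ : ℕ) : Prop :=
  k₁ ∈ Finset.Icc 1 (n - 1) ∧ k₂ ∈ Finset.Icc 1 (n - 1) ∧ k₁ < k₂ ∧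
    (0 < rStat w k₁ ∧ 0 < sStat w k₁) ∧ (0 < rStat w k₂ ∧ 0 < sStat w k₂) ∧
    ∀ j ∈ Finset.Icc 1 (n - 1), 0 < rStat w j ∧ 0 < sStat w j → j = k₁ ∨ j = k₂

/-- `xStat w k` = the number of indices `i < k` with `rᵢ = 0` and `sᵢ > 0`. -/
def xStat (w : List Bool) (k : ℕ) : ℕ :=
  ((Finset.Ico 1 k).filter fun i => rStat w i = 0 ∧ 0 < sStat w i).card

/-- `yStat w k` = the number of indices `i < k` with `rᵢ > 0` and `sᵢ = 0`. -/
def yStat (w : List Bool) (k : ℕ) : ℕ :=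
  ((Finset.Ico 1 k).filter fun i => 0 < rStat w i ∧ sStat w i = 0).card

/-- The generating function `m(x) = Σ Mₙ xⁿ` of the Motzkin numbers, over `ℚ`. -/
noncomputable def motzkinGF : PowerSeries ℚ := PowerSeries.mk fun n => (motzkin n : ℚ)

section MotzkinGFProof

open List

/-! ### Auxiliary lemmas for `motzkinBallot_gf` -/

private lemma prefix_append_cases {α : Type*} {p l₁ l₂ : List α} (h : p <+: l₁ ++ l₂) :
    p <+: l₁ ∨ ∃ q, q <+: l₂ ∧ p = l₁ ++ q := by
  rcases le_or_gt p.length l₁.length with hl | hl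
  · exact Or.inl (List.prefix_of_prefix_length_le h (List.prefix_append _ _) hl)
  · have h₁ : l₁ <+: p := List.prefix_of_prefix_length_le (List.prefix_append _ _) h hl.le
    obtain ⟨q, rfl⟩ := h₁
    obtain ⟨t, ht⟩ := h
    rw [List.append_assoc] at ht
    exact Or.inr ⟨q, ⟨t, List.append_cancel_left ht⟩, rfl⟩

private lemma head_ne_false {x : Option Bool} {v : List (Option Bool)}
    (h : IsMotzkinWord (x :: v)) : x ≠ some false := by
  intro hx
  subst hx
  have := h.2 [some false] ⟨v, rfl⟩
  simp at this

private lemma motzkin_replicate (n : ℕ) : IsMotzkinWord (List.replicate n none) := by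
  refine ⟨by simp [List.count_replicate], fun p hp => ?_⟩
  have h0 : (List.replicate n (none : Option Bool)).count (some false) = 0 := by
    simp [List.count_replicate]
  have := hp.sublist.count_le (some false)
  omega

private lemma motzkin_cons_none {v : List (Option Bool)} :
    IsMotzkinWord (none :: v) ↔ IsMotzkinWord v := by
  constructor
  · intro h
    refine ⟨by simpa using h.1, fun p hp => ?_⟩
    have := h.2 (none :: p) (by obtain ⟨t, rfl⟩ := hp; exact ⟨t, rfl⟩)
    simpa using this
  · intro h
    refine ⟨by simpa using h.1, fun p hp => ?_⟩
    match p, hp with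
    | [], _ => simp
    | a :: q, hp =>
      obtain ⟨t, ht⟩ := hp
      injection ht with h1 h2
      subst h1
      have := h.2 q ⟨t, h2⟩
      simpa using this

private lemma motzkin_glue {A B : List (Option Bool)} (hA : IsMotzkinWord A)
    (hB : IsMotzkinWord B) : IsMotzkinWord (some true :: A ++ some false :: B) := by
  have hcA := hA.1
  have hcB := hB.1
  refine ⟨by simp [List.count_append, List.count_cons]; omega, fun p hp => ?_⟩
  match p, hp with
  | [], _ => simp
  | a :: q, hp =>
    obtain ⟨t, ht⟩ := hp
    injection ht with h1 h2
    subst h1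
    have hq : q <+: A ++ some false :: B := ⟨t, h2⟩
    rcases prefix_append_cases hq with hqA | ⟨r, hr, rfl⟩
    · have := hA.2 q hqA
      simp [List.count_cons]
      omega
    · match r, hr with
      | [], _ =>
        simp [List.count_append, List.count_cons]
        omega
      | b :: s, hr =>
        obtain ⟨t', ht'⟩ := hr
        rw [List.cons_append] at ht'
        injection ht' with hb1 hb2
        subst hb1
        have := hB.2 s ⟨t', hb2⟩
        simp [List.count_append, List.count_cons]
        omega

private lemma motzkin_split {v : List (Option Bool)} (h : IsMotzkinWord (some true :: v)) :
    ∃ A B, IsMotzkinWord A ∧ IsMotzkinWord B ∧ v = A ++ some false :: B := by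
  have hQ : ∃ i, (v.take i).count (some false) = (v.take i).count (some true) + 1 := by
    refine ⟨v.length, ?_⟩
    have := h.1
    simp only [List.take_length]
    simp [List.count_cons] at this
    omega
  have ht : ((v.take (Nat.find hQ)).count (some false)
      = (v.take (Nat.find hQ)).count (some true) + 1) := Nat.find_spec hQ
  set t := Nat.find hQ with htdef
  have hmin : ∀ i < t, (v.take i).count (some false) ≠ (v.take i).count (some true) + 1 :=
    fun i hi => Nat.find_min hQ hi
  have hpre : ∀ i : ℕ, (v.take i).count (some false) ≤ (v.take i).count (some true) + 1 := by
    intro i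
    have := h.2 (some true :: v.take i) ⟨v.drop i, by simp⟩
    simpa [List.count_cons] using this
  have hlt : ∀ i < t, (v.take i).count (some false) ≤ (v.take i).count (some true) := by
    intro i hi
    have h1 := hpre i
    have h2 := hmin i hi
    omega
  have ht1 : 1 ≤ t := by
    rcases Nat.eq_zero_or_pos t with h0 | h
    · rw [h0] at ht; simp at ht
    · exact h
  have htlen : t ≤ v.length := by
    refine Nat.find_min' hQ ?_
    have := h.1
    simp only [List.take_length]
    simp [List.count_cons] at this
    omega
  have hlt' : t - 1 < v.length := by omega
  have htake : v.take t = v.take (t - 1) ++ [v[t - 1]] := by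
    conv_lhs => rw [show t = (t - 1) + 1 by omega]
    rw [List.take_succ, List.getElem?_eq_getElem hlt']
    rfl
  have h1 := hlt (t - 1) (by omega)
  have htri : v[t - 1]'hlt' = none ∨ v[t - 1]'hlt' = some false ∨ v[t - 1]'hlt' = some true := by
    rcases v[t - 1]'hlt' with _ | b
    · exact Or.inl rfl
    · cases b
      · exact Or.inr (Or.inl rfl)
      · exact Or.inr (Or.inr rfl)
  rw [htake] at ht
  simp only [List.count_append, List.count_cons, List.count_nil] at ht
  obtain ⟨he1, he2⟩ : v[t - 1]'hlt' = some false ∧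
      (v.take (t - 1)).count (some false) = (v.take (t - 1)).count (some true) := by
    rcases htri with he | he | he
    · exfalso; rw [he] at ht; simp at ht; omega
    · refine ⟨he, ?_⟩
      rw [he] at ht
      simp at ht
      omega
    · exfalso; rw [he] at ht; simp at ht; omega
  have ht2 : (v.take t).count (some false) = (v.take t).count (some true) + 1 := by
    rw [htake, he1]
    simp [List.count_append, List.count_cons]
    omega
  refine ⟨v.take (t - 1), v.drop t, ⟨he2, fun p hp => ?_⟩, ⟨?_, fun p hp => ?_⟩, ?_⟩
  · -- prefixes of A
    have hlen : p.length ≤ (v.take (t - 1)).length := hp.length_le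
    rw [List.length_take] at hlen
    have hplen : p.length < t := by omega
    have hpl : p.length ≤ t - 1 := by omega
    have hpe : p = v.take p.length := by
      conv_lhs => rw [List.prefix_iff_eq_take.mp hp]
      rw [List.take_take, min_eq_left hpl]
    rw [hpe]
    exact hlt _ hplen
  · -- counts of B
    have h2 : (v.take t).count (some false) + (v.drop t).count (some false)
        = v.count (some false) := by
      rw [← List.count_append, List.take_append_drop]
    have h3 : (v.take t).count (some true) + (v.drop t).count (some true)
        = v.count (some true) := by
      rw [← List.count_append, List.take_append_drop]
    have h4 := h.1
    simp [List.count_cons] at h4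
    omega
  · -- prefixes of B
    obtain ⟨s, hs⟩ := hp
    have hwp : (some true :: (v.take t ++ p)) <+: (some true :: v) := by
      refine ⟨s, ?_⟩
      simp only [List.cons_append]
      rw [List.append_assoc, hs, List.take_append_drop]
    have h5 := h.2 _ hwp
    simp [List.count_cons, List.count_append] at h5
    omega
  · -- v = A ++ some false :: B
    have hts : t - 1 + 1 = t := by omega
    conv_lhs => rw [← List.take_append_drop (t - 1) v]
    rw [List.drop_eq_getElem_cons hlt', he1, hts]

private lemma motzkin_append_false_len {X Y C D : List (Option Bool)}
    (hX : IsMotzkinWord X) (hY : IsMotzkinWord Y)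
    (heq : X ++ some false :: C = Y ++ some false :: D) : ¬ X.length < Y.length := by
  intro hlen
  have h1 : X ++ [some false] <+: Y ++ some false :: D := by
    refine ⟨C, ?_⟩
    rw [← heq]
    simp
  have hpre : X ++ [some false] <+: Y := by
    refine List.prefix_of_prefix_length_le h1 (List.prefix_append _ _) ?_
    simp
    omega
  have h2 := hY.2 _ hpre
  have h3 := hX.1
  simp [List.count_append] at h2
  omega

private lemma motzkin_append_false_inj {A B A' B' : List (Option Bool)}
    (hA : IsMotzkinWord A) (hA' : IsMotzkinWord A')
    (h : A ++ some false :: B = A' ++ some false :: B') : A = A' ∧ B = B' := by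
  have hlen : A.length = A'.length := by
    by_contra hne
    rcases Nat.lt_or_ge A.length A'.length with hl | hg
    · exact motzkin_append_false_len hA hA' h hl
    · exact motzkin_append_false_len hA' hA h.symm (by omega)
  obtain ⟨h1, h2⟩ := List.append_inj h hlen
  refine ⟨h1, ?_⟩
  injection h2

/-- The condition on a word to be counted by `T_{·,k}` (without the length constraint). -/
private def Econd (k : ℕ) (w : List (Option Bool)) : Prop :=
  IsMotzkinWord w ∧ (∀ j < k - 1, w.getD j none ≠ some false) ∧
    (w.getD (k - 1) none = some false ∨ w.length = k - 1)

private def Eset (n k : ℕ) : Set (List (Option Bool)) := {w | w.length = n ∧ Econd k w}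

private def Mset (n : ℕ) : Set (List (Option Bool)) := {w | w.length = n ∧ IsMotzkinWord w}

private lemma Eset_finite (n k : ℕ) : (Eset n k).Finite :=
  (List.finite_length_eq _ n).subset fun _ hw => hw.1

private lemma Mset_finite (n : ℕ) : (Mset n).Finite :=
  (List.finite_length_eq _ n).subset fun _ hw => hw.1

private lemma motzkin_eq (n : ℕ) : motzkin n = (Mset n).ncard := rfl

private lemma ballot_eq (n k : ℕ) (hk : 1 ≤ k) : motzkinBallot n k = (Eset n k).ncard := by
  rcases eq_or_ne (n + 1) k with h | h
  · rw [motzkinBallot, if_pos h]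
    have hEs : Eset n k = {List.replicate n none} := by
      ext w
      simp only [Eset, Econd, Set.mem_setOf_eq, Set.mem_singleton_iff]
      constructor
      · rintro ⟨hlen, hm, hnd, _⟩
        have hno : ∀ j (hj : j < w.length), w[j] ≠ some false := by
          intro j hj hjw
          refine hnd j (by omega) ?_
          rw [List.getD_eq_getElem _ _ hj, hjw]
        have hdn : (some false : Option Bool) ∉ w := by
          intro hmem
          obtain ⟨j, hj, hjw⟩ := List.mem_iff_getElem.mp hmem
          exact hno j hj hjw
        have hcd : w.count (some false) = 0 := List.count_eq_zero.mpr hdn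
        have hcu : w.count (some true) = 0 := by rw [← hm.1]; exact hcd
        have hun : (some true : Option Bool) ∉ w := List.count_eq_zero.mp hcu
        have : ∀ x ∈ w, x = (none : Option Bool) := by
          intro x hx
          rcases x with _ | b
          · rfl
          · rcases b with _ | _
            · exact absurd hx hdn
            · exact absurd hx hun
        rw [List.eq_replicate_of_mem this, hlen]
      · rintro rfl
        refine ⟨by simp, motzkin_replicate n, fun j hj => ?_, Or.inr (by simp; omega)⟩
        have : (List.replicate n (none : Option Bool)).getD j none = none := by
          rcases Nat.lt_or_ge j n with hjn | hjn
          · rw [List.getD_eq_getElem _ _ (by simpa using hjn)]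
            simp
          · exact List.getD_eq_default _ _ (by simpa using hjn)
        rw [this]
        simp
    rw [hEs, Set.ncard_singleton]
  · rw [motzkinBallot, if_neg h]
    congr 1
    ext w
    simp only [Eset, Econd, Set.mem_setOf_eq]
    constructor
    · rintro ⟨hlen, hm, hgd, hnd⟩
      exact ⟨hlen, hm, hnd, Or.inl hgd⟩
    · rintro ⟨hlen, hm, hnd, hdis⟩
      rcases hdis with hgd | hl
      · exact ⟨hlen, hm, hgd, hnd⟩
      · omega

private lemma mem_Eset_cons_none {l m : ℕ} {v : List (Option Bool)} :
    (none :: v) ∈ Eset (m + 1) (l + 2) ↔ v ∈ Eset m (l + 1) := by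
  simp only [Eset, Econd, Set.mem_setOf_eq, show l + 2 - 1 = l + 1 from rfl,
    show l + 1 - 1 = l from rfl, List.length_cons]
  constructor
  · rintro ⟨hlen, hm, hnd, hdis⟩
    refine ⟨by omega, motzkin_cons_none.mp hm, fun j hj => ?_, ?_⟩
    · have := hnd (j + 1) (by omega)
      rwa [List.getD_cons_succ] at this
    · rcases hdis with hgd | hl
      · rw [List.getD_cons_succ] at hgd
        exact Or.inl hgd
      · exact Or.inr (by omega)
  · rintro ⟨hlen, hm, hnd, hdis⟩
    refine ⟨by omega, motzkin_cons_none.mpr hm, fun j hj => ?_, ?_⟩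
    · rcases j with _ | i
      · simp
      · rw [List.getD_cons_succ]
        exact hnd i (by omega)
    · rcases hdis with hgd | hl
      · exact Or.inl (by rwa [List.getD_cons_succ])
      · exact Or.inr (by omega)

private lemma mem_Eset_u {l : ℕ} {A B : List (Option Bool)} (hA : IsMotzkinWord A)
    (hB : IsMotzkinWord B) {n : ℕ} :
    (some true :: A ++ some false :: B) ∈ Eset n (l + 2) ↔
      ((∀ j < l, A.getD j none ≠ some false) ∧
        (A.getD l none = some false ∨ A.length = l) ∧ n = A.length + B.length + 2) := by
  have gb : (A ++ some false :: B).getD A.length none = some false := by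
    rw [List.getD_append_right _ _ _ _ le_rfl]
    simp
  have ga : ∀ j < A.length, (A ++ some false :: B).getD j none = A.getD j none :=
    fun j hj => List.getD_append _ _ _ _ hj
  have hlenw : (some true :: A ++ some false :: B).length = A.length + B.length + 2 := by
    simp
    omega
  rw [show (some true :: A ++ some false :: B) = some true :: (A ++ some false :: B) from
    List.cons_append] at hlenw ⊢
  simp only [Eset, Econd, Set.mem_setOf_eq, show l + 2 - 1 = l + 1 from rfl]
  constructor
  · rintro ⟨hlen, hm, hnd, hdis⟩
    have hla : l ≤ A.length := by
      by_contra hcon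
      push_neg at hcon
      refine hnd (A.length + 1) (by omega) ?_
      rw [List.getD_cons_succ, gb]
    refine ⟨fun j hj => ?_, ?_, by omega⟩
    · have := hnd (j + 1) (by omega)
      rwa [List.getD_cons_succ, ga j (by omega)] at this
    · rcases Nat.eq_or_lt_of_le hla with heq | hlt
      · exact Or.inr heq.symm
      · rcases hdis with hgd | hln
        · rw [List.getD_cons_succ, ga l hlt] at hgd
          exact Or.inl hgd
        · omega
  · rintro ⟨hnd, hdis, hn⟩
    have hla : l ≤ A.length := by
      rcases hdis with hgd | rfl
      · by_contra hcon
        push_neg at hcon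
        rw [List.getD_eq_default _ _ (by omega)] at hgd
        exact (by simp : (none : Option Bool) ≠ some false) hgd
      · exact le_rfl
    refine ⟨by omega, motzkin_glue hA hB, fun j hj => ?_, ?_⟩
    · rcases j with _ | i
      · simp
      · rw [List.getD_cons_succ]
        have hia : i < A.length := by omega
        rw [ga i hia]
        exact hnd i (by omega)
    · left
      rw [List.getD_cons_succ]
      rcases Nat.eq_or_lt_of_le hla with heq | hlt
      · rw [← heq] at gb
        exact gb
      · rw [ga l hlt]
        rcases hdis with hgd | hln
        · exact hgd
        · omega

private lemma hset_eq (l m : ℕ) :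
    {w ∈ Eset (m + 1) (l + 2) | w.getD 0 none = none} =
      (fun v => (none : Option Bool) :: v) '' Eset m (l + 1) := by
  ext w
  constructor
  · rintro ⟨hw, h0⟩
    rcases w with _ | ⟨a, v⟩
    · exact absurd hw.1 (by simp)
    · rw [List.getD_cons_zero] at h0
      subst h0
      exact ⟨v, mem_Eset_cons_none.mp hw, rfl⟩
  · rintro ⟨v, hv, rfl⟩
    exact ⟨mem_Eset_cons_none.mpr hv, by simp⟩

private lemma uset_eq (l m : ℕ) :
    {w ∈ Eset (m + 2) (l + 2) | w.getD 0 none = some true} =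
      (fun p : List (Option Bool) × List (Option Bool) =>
          some true :: p.1 ++ some false :: p.2) ''
        {p | Econd (l + 1) p.1 ∧ IsMotzkinWord p.2 ∧ p.1.length + p.2.length = m} := by
  ext w
  constructor
  · rintro ⟨hw, h0⟩
    rcases w with _ | ⟨a, v⟩
    · exact absurd hw.1 (by simp)
    · rw [List.getD_cons_zero] at h0
      subst h0
      have hmv : IsMotzkinWord (some true :: v) := hw.2.1
      obtain ⟨A, B, hA, hB, rfl⟩ := motzkin_split hmv
      rw [show (some true :: (A ++ some false :: B)) = (some true :: A ++ some false :: B)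
        from rfl] at hw
      obtain ⟨hnd, hdis, hn⟩ := (mem_Eset_u hA hB).mp hw
      refine ⟨(A, B), ⟨⟨hA, ?_, ?_⟩, hB, show A.length + B.length = m by omega⟩, rfl⟩
      · simpa using hnd
      · simpa using hdis
  · rintro ⟨⟨A, B⟩, ⟨hcond, hB, hlen⟩, rfl⟩
    obtain ⟨hA, hnd, hdis⟩ := hcond
    refine ⟨(mem_Eset_u hA hB).mpr ⟨?_, ?_, by omega⟩, by simp⟩
    · simpa using hnd
    · simpa using hdis

private lemma ncard_biUnion {ι α : Type*} (s : Finset ι) (f : ι → Set α)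
    (hfin : ∀ i ∈ s, (f i).Finite)
    (hdisj : ∀ i ∈ s, ∀ j ∈ s, i ≠ j → Disjoint (f i) (f j)) :
    (⋃ i ∈ s, f i).ncard = ∑ i ∈ s, (f i).ncard := by
  classical
  induction s using Finset.induction with
  | empty => simp
  | @insert a s ha ih =>
    rw [Finset.sum_insert ha, Finset.set_biUnion_insert]
    rw [Set.ncard_union_eq ?_ (hfin a (by simp)) ?_]
    · rw [ih (fun i hi => hfin i (by simp [hi]))
        (fun i hi j hj hij => hdisj i (by simp [hi]) j (by simp [hj]) hij)]
    · simp only [Set.disjoint_iUnion_right]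
      intro i hi
      have hi' : i ∈ s := by exact_mod_cast hi
      exact hdisj a (by simp) i (Finset.mem_insert_of_mem hi') (fun h => ha (h ▸ hi'))
    · exact Set.Finite.biUnion s.finite_toSet
        (fun i hi => hfin i (Finset.mem_insert_of_mem (by exact_mod_cast hi)))

private lemma ncard_prod {α β : Type*} {s : Set α} {t : Set β} (hs : s.Finite) (ht : t.Finite) :
    (s ×ˢ t).ncard = s.ncard * t.ncard := by
  rw [Set.ncard_eq_toFinset_card _ (hs.prod ht), ← Set.Finite.toFinset_prod hs ht,
    Finset.card_product, Set.ncard_eq_toFinset_card _ hs, Set.ncard_eq_toFinset_card _ ht]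

private lemma pairs_card (l m : ℕ) :
    {p : List (Option Bool) × List (Option Bool) |
        Econd (l + 1) p.1 ∧ IsMotzkinWord p.2 ∧ p.1.length + p.2.length = m}.ncard =
      ∑ ab ∈ Finset.HasAntidiagonal.antidiagonal m, (Eset ab.1 (l + 1)).ncard * motzkin ab.2 := by
  have hset : {p : List (Option Bool) × List (Option Bool) |
        Econd (l + 1) p.1 ∧ IsMotzkinWord p.2 ∧ p.1.length + p.2.length = m} =
      ⋃ ab ∈ Finset.HasAntidiagonal.antidiagonal m, (Eset ab.1 (l + 1)) ×ˢ (Mset ab.2) := by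
    ext ⟨A, B⟩
    simp only [Set.mem_setOf_eq, Set.mem_iUnion, Finset.HasAntidiagonal.mem_antidiagonal, Set.mem_prod,
      Eset, Mset]
    constructor
    · rintro ⟨hc, hB, hlen⟩
      exact ⟨(A.length, B.length), hlen, ⟨rfl, hc⟩, ⟨rfl, hB⟩⟩
    · rintro ⟨⟨a, b⟩, hab, ⟨hA1, hA2⟩, ⟨hB1, hB2⟩⟩
      exact ⟨hA2, hB2, by simp at hA1 hB1; omega⟩
  rw [hset, ncard_biUnion]
  · refine Finset.sum_congr rfl fun ab _ => ?_
    rw [ncard_prod (Eset_finite _ _) (Mset_finite _), motzkin_eq]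
  · exact fun ab _ => (Eset_finite _ _).prod (Mset_finite _)
  · intro ab hab cd hcd hne
    rw [Set.disjoint_left]
    rintro ⟨A, B⟩ h1 h2
    apply hne
    have e1 : A.length = ab.1 := h1.1.1
    have e2 : B.length = ab.2 := h1.2.1
    have e3 : A.length = cd.1 := h2.1.1
    have e4 : B.length = cd.2 := h2.2.1
    exact Prod.ext (by omega) (by omega)

private lemma cover_split (n l : ℕ) (hn : 1 ≤ n) :
    Eset n (l + 2) = {w ∈ Eset n (l + 2) | w.getD 0 none = none} ∪
      {w ∈ Eset n (l + 2) | w.getD 0 none = some true} := by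
  ext w
  constructor
  · intro hw
    rcases w with _ | ⟨a, v⟩
    · exact absurd hw.1 (by simp; omega)
    · have hne := head_ne_false hw.2.1
      rcases a with _ | b
      · exact Or.inl ⟨hw, by simp⟩
      · rcases b with _ | _
        · exact absurd rfl hne
        · exact Or.inr ⟨hw, by simp⟩
  · rintro (⟨h, _⟩ | ⟨h, _⟩) <;> exact h

private lemma card_step (l m : ℕ) :
    (Eset (m + 2) (l + 2)).ncard = (Eset (m + 1) (l + 1)).ncard +
      ∑ ab ∈ Finset.HasAntidiagonal.antidiagonal m, (Eset ab.1 (l + 1)).ncard * motzkin ab.2 := by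
  have hfin : (Eset (m + 2) (l + 2)).Finite := Eset_finite _ _
  rw [cover_split (m + 2) l (by omega)]
  rw [Set.ncard_union_eq ?_ (hfin.subset fun w hw => hw.1) (hfin.subset fun w hw => hw.1)]
  · congr 1
    · rw [hset_eq, Set.ncard_image_of_injective _ (List.cons_injective)]
    · rw [uset_eq, Set.ncard_image_of_injOn, pairs_card]
      rintro ⟨A, B⟩ hp ⟨A', B'⟩ hq heq
      simp only at heq
      have := motzkin_append_false_inj hp.1.1 hq.1.1 (List.cons_injective heq)
      exact Prod.ext this.1 this.2
  · rw [Set.disjoint_left]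
    rintro w ⟨_, h1⟩ ⟨_, h2⟩
    rw [h1] at h2
    exact (by simp : (none : Option Bool) ≠ some true) h2

private lemma card_one (l : ℕ) : (Eset 1 (l + 2)).ncard = (Eset 0 (l + 1)).ncard := by
  have hEq : Eset 1 (l + 2) = (fun v => (none : Option Bool) :: v) '' Eset 0 (l + 1) := by
    rw [← hset_eq l 0]
    ext w
    constructor
    · intro hw
      refine ⟨hw, ?_⟩
      rcases w with _ | ⟨a, v⟩
      · exact absurd hw.1 (by simp)
      · have hne := head_ne_false hw.2.1
        rcases a with _ | b
        · simp
        · rcases b with _ | _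
          · exact absurd rfl hne
          · exfalso
            have hm := hw.2.1.1
            have hv : v = [] := by
              have := hw.1
              simp at this
              simpa using this
            subst hv
            simp at hm
    · rintro ⟨h, _⟩
      exact h
  rw [hEq, Set.ncard_image_of_injective _ (List.cons_injective)]

private lemma ballot_succ_zero (l : ℕ) : motzkinBallot 0 (l + 2) = 0 := by
  rw [ballot_eq _ _ (by omega)]
  have : Eset 0 (l + 2) = ∅ := by
    ext w
    simp only [Eset, Econd, Set.mem_setOf_eq, Set.mem_empty_iff_false, iff_false, not_and]
    intro hlen hm hnd
    rintro (hgd | hl)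
    · rw [List.getD_eq_default _ _ (by omega)] at hgd
      exact (by simp : (none : Option Bool) ≠ some false) hgd
    · omega
  rw [this]
  simp

private lemma ballot_succ_one (n : ℕ) : motzkinBallot (n + 1) 1 = 0 := by
  rw [ballot_eq _ _ le_rfl]
  have : Eset (n + 1) 1 = ∅ := by
    ext w
    simp only [Eset, Econd, Set.mem_setOf_eq, Set.mem_empty_iff_false, iff_false, not_and]
    intro hlen hm hnd
    rintro (hgd | hl)
    · rcases w with _ | ⟨a, v⟩
      · simp at hlen
      · rw [show (1 : ℕ) - 1 = 0 from rfl, List.getD_cons_zero] at hgd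
        exact head_ne_false hm hgd
    · omega
  rw [this]
  simp

open PowerSeries in
private theorem ballot_gf_aux (l : ℕ) :
    PowerSeries.mk (fun n => (motzkinBallot n (l + 1) : ℚ)) =
      (1 + X * motzkinGF) ^ l * X ^ l := by
  induction l with
  | zero =>
    simp only [pow_zero, mul_one]
    ext n
    rw [PowerSeries.coeff_mk, PowerSeries.coeff_one]
    rcases n with _ | n
    · simp [motzkinBallot]
    · simp [ballot_succ_one]
  | succ l ih =>
    have key : PowerSeries.mk (fun n => (motzkinBallot n (l + 2) : ℚ)) =
        X * PowerSeries.mk (fun n => (motzkinBallot n (l + 1) : ℚ)) +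
          X * (X * (PowerSeries.mk (fun n => (motzkinBallot n (l + 1) : ℚ)) * motzkinGF)) := by
      ext n
      rw [map_add, PowerSeries.coeff_mk]
      rcases n with _ | n
      · rw [ballot_succ_zero]
        simp [PowerSeries.coeff_zero_eq_constantCoeff, map_mul]
      · rw [PowerSeries.coeff_succ_X_mul, PowerSeries.coeff_succ_X_mul, PowerSeries.coeff_mk]
        rcases n with _ | q
        · have h0 : (PowerSeries.coeff 0)
              (X * (PowerSeries.mk (fun n => (motzkinBallot n (l + 1) : ℚ)) * motzkinGF)) = 0 := by
            simp [PowerSeries.coeff_zero_eq_constantCoeff, map_mul]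
          rw [h0, add_zero]
          rw [ballot_eq 1 (l + 2) (by omega), ballot_eq 0 (l + 1) (by omega)]
          exact_mod_cast card_one l
        · rw [PowerSeries.coeff_succ_X_mul, PowerSeries.coeff_mul]
          rw [ballot_eq (q + 2) (l + 2) (by omega), card_step l q]
          push_cast
          congr 1
          · rw [ballot_eq (q + 1) (l + 1) (by omega)]
          · refine Finset.sum_congr rfl fun ab _ => ?_
            rw [PowerSeries.coeff_mk, ballot_eq ab.1 (l + 1) (by omega)]
            simp [motzkinGF]
    rw [key, ih, pow_succ, pow_succ]
    ring

end MotzkinGFProof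

open PowerSeries in
/-- **Lemma (generating function of the Motzkin ballot numbers).** For fixed `k ≥ 1`,
`Σ_{n ≥ k-1} T_{n,k} xⁿ = (1 + x·m(x))^{k-1}·x^{k-1}` (note `T_{n,k} = 0` for `n < k-1`). -/
theorem motzkinBallot_gf (k : ℕ) (hk : 1 ≤ k) :
    PowerSeries.mk (fun n => (motzkinBallot n k : ℚ)) =
      (1 + X * motzkinGF) ^ (k - 1) * X ^ (k - 1) := by
  obtain ⟨l, rfl⟩ := Nat.exists_eq_add_of_le hk
  rw [show 1 + l = l + 1 from Nat.add_comm 1 l, Nat.add_sub_cancel]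
  exact ballot_gf_aux l
end

section
/- Let p ≥ 3 be a prime number and n ≥ 1. Then D_n^p is the disjoint union of D_n^{1,p-1} and D_n^{p-1,1}, and these two sets have the same cardinality, so |D_n^p| = 2·|D_n^{1,p-1}|. -/
namespace DyckAux

variable {α : Type*}

/-! ### Number theory -/

lemma le_choose : ∀ (m k : ℕ), 1 ≤ k → k < m → m ≤ m.choose k := by
  intro m
  induction m with
  | zero => omega
  | succ m ih =>
    intro k h1 h2
    rcases eq_or_lt_of_le (Nat.lt_succ_iff.mp h2) with h | h
    · subst h; simp [Nat.choose_succ_self_right]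
    · obtain ⟨k', rfl⟩ : ∃ k', k = k' + 1 := ⟨k - 1, by omega⟩
      rw [Nat.choose_succ_succ]
      simp only [Nat.succ_eq_add_one]
      have h3 := ih (k' + 1) h1 h
      have h4 : 1 ≤ m.choose k' := Nat.choose_pos (by omega)
      omega

lemma choose_eq_prime {p r s : ℕ} (hp : p.Prime) (hr : 1 ≤ r) (hs : 1 ≤ s)
    (h : (r + s).choose r = p) : (r = 1 ∧ s = p - 1) ∨ (r = p - 1 ∧ s = 1) := by
  have hle : r + s ≤ p := h ▸ le_choose (r + s) r hr (by omega)
  have hdvd : p ∣ (r + s).factorial :=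
    ⟨r.factorial * (r + s - r).factorial, by
      rw [← Nat.choose_mul_factorial_mul_factorial (Nat.le_add_right r s), h, mul_assoc]⟩
  have hge : p ≤ r + s := (Nat.Prime.dvd_factorial hp).mp hdvd
  have hps : r + s = p := le_antisymm hle hge
  by_contra hc
  push_neg at hc
  have hr2 : 2 ≤ r := by
    rcases eq_or_lt_of_le hr with h' | h'
    · exact absurd (by omega : s = p - 1) (hc.1 h'.symm)
    · omega
  have hs2 : 2 ≤ s := by
    rcases eq_or_lt_of_le hs with h' | h'
    · exact absurd (by omega : r = p - 1) (fun hh => hc.2 hh h'.symm)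
    · omega
  obtain ⟨m, hm⟩ : ∃ m, p = m + 1 := ⟨p - 1, by omega⟩
  obtain ⟨r', rfl⟩ : ∃ r', r = r' + 1 := ⟨r - 1, by omega⟩
  rw [hps] at h
  rw [hm] at h
  have key := Nat.add_one_mul_choose_eq m r'
  rw [h] at key
  have hCr : m.choose r' = r' + 1 := by
    have := Nat.eq_of_mul_eq_mul_left (show 0 < m + 1 by omega) key.symm
    omega
  have hlb : m ≤ m.choose r' := le_choose m r' (by omega) (by omega)
  omega

lemma prod_eq_prime {ι : Type*} {s : Finset ι} {f : ι → ℕ} {p : ℕ} (hp : p.Prime)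
    (hf : ∀ i ∈ s, 1 ≤ f i) (h : ∏ i ∈ s, f i = p) :
    ∃ i ∈ s, f i = p ∧ ∀ j ∈ s, j ≠ i → f j = 1 := by
  classical
  induction s using Finset.induction_on with
  | empty =>
    simp at h
    exact absurd h.symm hp.ne_one
  | @insert a t hnotmem ih =>
    rw [Finset.prod_insert hnotmem] at h
    have hfa : f a ∣ p := ⟨_, h.symm⟩
    rcases (Nat.Prime.eq_one_or_self_of_dvd hp _ hfa) with h1 | h1
    · rw [h1, one_mul] at h
      obtain ⟨i, hi, hfi, huniq⟩ := ih (fun j hj => hf j (Finset.mem_insert_of_mem hj)) h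
      refine ⟨i, Finset.mem_insert_of_mem hi, hfi, ?_⟩
      intro j hj hji
      rcases Finset.mem_insert.mp hj with rfl | hj'
      · exact h1
      · exact huniq j hj' hji
    · refine ⟨a, Finset.mem_insert_self a t, h1, ?_⟩
      have ht : ∏ i ∈ t, f i = 1 := by
        rw [h1] at h
        have h2 : p * ∏ i ∈ t, f i = p * 1 := by rw [mul_one]; exact h
        exact Nat.eq_of_mul_eq_mul_left hp.pos h2
      intro j hj hja
      rcases Finset.mem_insert.mp hj with rfl | hj'
      · exact absurd rfl hja
      · exact (Finset.prod_eq_one_iff_of_one_le'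
          (fun i hi => hf i (Finset.mem_insert_of_mem hi))).mp ht j hj'

/-! ### findIdxs API -/

lemma findIdxs_nil (p : α → Bool) : List.findIdxs p [] = [] := rfl

lemma findIdxs_append (p : α → Bool) (l₁ l₂ : List α) :
    List.findIdxs p (l₁ ++ l₂) =
      List.findIdxs p l₁ ++ (List.findIdxs p l₂).map (· + l₁.length) := by
  induction l₁ with
  | nil => simp [findIdxs_nil]
  | cons a l ih =>
    simp only [List.cons_append, List.findIdxs_cons, ih]
    cases p a <;> simp [List.map_map, Function.comp, Nat.add_assoc, Nat.add_comm 1,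
      List.findIdxs_start (s := l.length + 1)]

lemma findIdxs_map {β : Type*} (p : β → Bool) (f : α → β) (l : List α) :
    List.findIdxs p (l.map f) = List.findIdxs (fun a => p (f a)) l := by
  induction l with
  | nil => simp [findIdxs_nil]
  | cons a l ih => simp [List.findIdxs_cons, ih, Function.comp_def]

lemma length_findIdxs (p : α → Bool) (l : List α) :
    (List.findIdxs p l).length = l.countP p := by
  induction l with
  | nil => simp [findIdxs_nil]
  | cons a l ih => rw [List.findIdxs_cons, List.countP_cons]; cases h : p a <;> simp [ih, h]

lemma mem_findIdxs_lt (p : α → Bool) (l : List α) : ∀ x ∈ List.findIdxs p l, x < l.length := by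
  intro x hx
  simpa using List.lt_add_of_mem_findIdxs x hx

lemma sorted_findIdxs (p : α → Bool) (l : List α) : (List.findIdxs p l).Pairwise (· < ·) := by
  exact List.pairwise_findIdxs

lemma findIdxs_reverse (p : α → Bool) (l : List α) :
    List.findIdxs p l.reverse =
      ((List.findIdxs p l).map (fun x => l.length - 1 - x)).reverse := by
  induction l with
  | nil => simp [findIdxs_nil]
  | cons a l ih =>
    rw [List.reverse_cons, findIdxs_append, ih]
    have hmc : List.map (fun x => (a :: l).length - 1 - x)
        (List.map (· + 1) (List.findIdxs p l)) =
        List.map (fun x => l.length - 1 - x) (List.findIdxs p l) := by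
      rw [List.map_map]
      apply List.map_congr_left
      intro x _
      simp only [Function.comp_apply, List.length_cons]
      omega
    cases h : p a
    · rw [show List.findIdxs p (a :: l) = List.map (· + 1) (List.findIdxs p l) by
        rw [List.findIdxs_cons, h, List.findIdxs_start (s := 0 + 1)]; rfl]
      rw [hmc]
      simp [List.findIdxs_cons, h, findIdxs_nil]
    · rw [show List.findIdxs p (a :: l) = 0 :: List.map (· + 1) (List.findIdxs p l) by
        rw [List.findIdxs_cons, h, List.findIdxs_start (s := 0 + 1)]; rfl]
      rw [List.map_cons, List.reverse_cons, hmc]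
      simp [findIdxs_nil, List.findIdxs_cons, h]

/-! ### The reverse-flip involution -/

def flipRev (w : List Bool) : List Bool := (w.map not).reverse

lemma flipRev_flipRev (w : List Bool) : flipRev (flipRev w) = w := by
  unfold flipRev
  rw [← List.map_reverse, List.reverse_reverse, List.map_map]
  have h : not ∘ not = id := by funext b; simp
  rw [h, List.map_id]

lemma flipRev_injective : Function.Injective flipRev :=
  Function.LeftInverse.injective flipRev_flipRev

lemma length_flipRev (w : List Bool) : (flipRev w).length = w.length := by simp [flipRev]

lemma count_map_not (c : Bool) (w : List Bool) : (w.map not).count c = w.count (!c) := by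
  rw [List.count_eq_countP, List.count_eq_countP, List.countP_map]
  congr 1
  funext b; cases b <;> cases c <;> rfl

lemma take_reverse' (l : List α) (k : ℕ) :
    l.reverse.take k = (l.drop (l.length - k)).reverse := by
  have := List.reverse_take (l := l.reverse) (i := k)
  rw [List.length_reverse, List.reverse_reverse] at this
  rw [← List.reverse_reverse (l.reverse.take k), this]

lemma drop_reverse' (l : List α) (k : ℕ) (hk : k ≤ l.length) :
    l.reverse.drop k = (l.take (l.length - k)).reverse := by
  rw [List.reverse_take]
  congr 1
  omega

lemma getD_reverse (l : List α) (d : α) {k : ℕ} (hk : k < l.length) :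
    l.reverse.getD k d = l.getD (l.length - 1 - k) d := by
  rw [List.getD_eq_getElem?_getD, List.getD_eq_getElem?_getD,
    List.getElem?_reverse hk]

lemma getD_mapRev {X : List ℕ} {g : ℕ → ℕ} {k : ℕ} (hk : k < X.length) :
    ((X.map g).reverse).getD k 0 = g (X.getD (X.length - 1 - k) 0) := by
  rw [getD_reverse _ _ (by simpa using hk), List.length_map]
  have h2 : X.length - 1 - k < X.length := by omega
  rw [List.getD_eq_getElem _ _ (by simpa using h2), List.getElem_map,
    List.getD_eq_getElem _ _ h2]

lemma getD_findIdxs_lt (p : α → Bool) (l : List α) {k : ℕ}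
    (hk : k < (List.findIdxs p l).length) : (List.findIdxs p l).getD k 0 < l.length := by
  rw [List.getD_eq_getElem _ _ hk]
  exact mem_findIdxs_lt p l _ (List.getElem_mem hk)

lemma getD_findIdxs_mono (p : α → Bool) (l : List α) {k : ℕ}
    (hk : k + 1 < (List.findIdxs p l).length) :
    (List.findIdxs p l).getD k 0 < (List.findIdxs p l).getD (k + 1) 0 := by
  rw [List.getD_eq_getElem _ _ (by omega), List.getD_eq_getElem _ _ hk]
  exact List.Pairwise.rel_get_of_lt (sorted_findIdxs p l)
    (a := ⟨k, by omega⟩) (b := ⟨k + 1, hk⟩) (by simp)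

lemma findIdxs_flipRev (c : Bool) (w : List Bool) :
    (flipRev w).findIdxs (· == c) =
      ((w.findIdxs (· == !c)).map (fun x => w.length - 1 - x)).reverse := by
  unfold flipRev
  rw [findIdxs_reverse, findIdxs_map, List.length_map]
  have hpred : (fun a : Bool => ((!a) == c)) = (fun a => a == !c) := by
    funext b; cases b <;> cases c <;> rfl
  rw [hpred]

/-- Generalized statistic: `gStat true = rStat`, `gStat false = sStat`. -/
def gStat (c : Bool) (w : List Bool) (i : ℕ) : ℕ :=
  ((w.take ((w.findIdxs (· == c)).getD i 0)).drop
    ((w.findIdxs (· == c)).getD (i - 1) 0 + 1)).count (!c)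

lemma rStat_eq_gStat (w : List Bool) (i : ℕ) : rStat w i = gStat true w i := rfl
lemma sStat_eq_gStat (w : List Bool) (i : ℕ) : sStat w i = gStat false w i := rfl

lemma gStat_flipRev (c : Bool) {n : ℕ} {w : List Bool} (hlen : w.length = 2 * n)
    (hcnt : w.count (!c) = n) {i : ℕ} (h1 : 1 ≤ i) (h2 : i ≤ n - 1) :
    gStat c (flipRev w) i = gStat (!c) w (n - i) := by
  have hn2 : 2 ≤ n := by omega
  set D := w.findIdxs (· == !c) with hD
  have hDlen : D.length = n := by
    rw [hD, length_findIdxs, ← List.count_eq_countP, hcnt]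
  clear_value D
  set d := D.getD (n - i) 0 with hd
  set d' := D.getD (n - 1 - i) 0 with hd'
  clear_value d d'
  have hni : n - i < n := by omega
  have hni1 : n - 1 - i < n := by omega
  have hmono : d' < d := by
    rw [hd, hd', hD]
    have h3 : n - i = (n - 1 - i) + 1 := by omega
    rw [h3]
    refine getD_findIdxs_mono _ _ ?_
    rw [length_findIdxs, ← List.count_eq_countP, hcnt]
    omega
  have hdlt : d < w.length := by
    rw [hd, hD]
    refine getD_findIdxs_lt _ _ ?_
    rw [length_findIdxs, ← List.count_eq_countP, hcnt]
    omega
  have hup : (flipRev w).findIdxs (· == c) = (D.map (fun x => w.length - 1 - x)).reverse := by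
    have h := findIdxs_flipRev c w
    rw [← hD] at h
    exact h
  have e1 : D.length - 1 - (i - 1) = n - i := by omega
  have e2 : D.length - 1 - i = n - 1 - i := by omega
  have hA : ((flipRev w).findIdxs (· == c)).getD (i - 1) 0 = w.length - 1 - d := by
    rw [hup, getD_mapRev (show i - 1 < D.length by omega), e1, ← hd]
  have hB : ((flipRev w).findIdxs (· == c)).getD i 0 = w.length - 1 - d' := by
    rw [hup, getD_mapRev (show i < D.length by omega), e2, ← hd']
  rw [gStat, hA, hB]
  have hseg1 : (flipRev w).take (w.length - 1 - d') =
      ((w.map not).drop (d' + 1)).reverse := by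
    rw [flipRev, take_reverse', List.length_map]
    congr 2
    omega
  rw [hseg1, drop_reverse' _ _ (by rw [List.length_drop, List.length_map]; omega)]
  rw [List.count_reverse]
  have hlen2 : ((w.map not).drop (d' + 1)).length = w.length - d' - 1 := by
    rw [List.length_drop, List.length_map]
    omega
  rw [hlen2]
  have harith : w.length - d' - 1 - (w.length - 1 - d + 1) = d - d' - 1 := by omega
  rw [harith]
  rw [← List.map_drop, ← List.map_take, count_map_not, Bool.not_not]
  rw [gStat, ← hD]
  have hj1 : n - i - 1 = n - 1 - i := by omega
  rw [hj1, ← hd, ← hd']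
  rw [List.drop_take, Nat.sub_sub, Bool.not_not]

/-! ### Transfer along `flipRev` -/

lemma count_drop_eq (c : Bool) (w : List Bool) (m : ℕ) :
    (w.drop m).count c = w.count c - (w.take m).count c := by
  have h := List.take_append_drop m w
  have h2 : w.count c = (w.take m).count c + (w.drop m).count c := by
    conv_lhs => rw [← h]
    rw [List.count_append]
  omega

lemma isDyckWord_flipRev {n : ℕ} {w : List Bool} (h : IsDyckWord n w) :
    IsDyckWord n (flipRev w) := by
  obtain ⟨hlen, hct, hcf, hpre⟩ := h
  refine ⟨by simp [flipRev, hlen], ?_, ?_, ?_⟩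
  · rw [flipRev, List.count_reverse, count_map_not]
    simpa using hcf
  · rw [flipRev, List.count_reverse, count_map_not]
    simpa using hct
  · intro q hq
    have hk : q.length ≤ w.length := by
      have := hq.length_le
      rwa [length_flipRev] at this
    rw [List.prefix_iff_eq_take] at hq
    rw [hq, flipRev, take_reverse', List.length_map]
    rw [List.count_reverse, List.count_reverse, ← List.map_drop, count_map_not, count_map_not]
    simp only [Bool.not_false, Bool.not_true]
    set m := w.length - q.length with hm
    have h1 := hpre _ (List.take_prefix m w)
    have h2 : (w.take m).count true ≤ n :=
      hct ▸ (List.take_prefix m w).sublist.count_le true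
    have h3 : (w.take m).count false ≤ n :=
      hcf ▸ (List.take_prefix m w).sublist.count_le false
    rw [count_drop_eq, count_drop_eq, hct, hcf]
    omega

lemma rStat_flipRev {n : ℕ} {w : List Bool} (hD : IsDyckWord n w) {j : ℕ}
    (h1 : 1 ≤ j) (h2 : j ≤ n - 1) : rStat (flipRev w) j = sStat w (n - j) := by
  rw [rStat_eq_gStat, sStat_eq_gStat]
  exact gStat_flipRev true hD.1 hD.2.2.1 h1 h2

lemma sStat_flipRev {n : ℕ} {w : List Bool} (hD : IsDyckWord n w) {j : ℕ}
    (h1 : 1 ≤ j) (h2 : j ≤ n - 1) : sStat (flipRev w) j = rStat w (n - j) := by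
  rw [rStat_eq_gStat, sStat_eq_gStat]
  exact gStat_flipRev false hD.1 hD.2.1 h1 h2

lemma mem_dyckRS_flipRev {n r s : ℕ} {w : List Bool} (h : w ∈ dyckRS n r s) :
    flipRev w ∈ dyckRS n s r := by
  obtain ⟨hD, i, hi, ⟨hrpos, hspos⟩, hr, hs, huniq⟩ := h
  rw [Finset.mem_Icc] at hi
  obtain ⟨hi1, hi2⟩ := hi
  have hn2 : 2 ≤ n := by omega
  have hD' := isDyckWord_flipRev hD
  have hni1 : 1 ≤ n - i := by omega
  have hni2 : n - i ≤ n - 1 := by omega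
  have hnni : n - (n - i) = i := by omega
  refine ⟨hD', n - i, Finset.mem_Icc.mpr ⟨hni1, hni2⟩, ⟨?_, ?_⟩, ?_, ?_, ?_⟩
  · rw [rStat_flipRev hD hni1 hni2, hnni]
    exact hspos
  · rw [sStat_flipRev hD hni1 hni2, hnni]
    exact hrpos
  · rw [rStat_flipRev hD hni1 hni2, hnni, hs]
  · rw [sStat_flipRev hD hni1 hni2, hnni, hr]
  · intro j hj hjpos
    rw [Finset.mem_Icc] at hj
    obtain ⟨hj1, hj2⟩ := hj
    rw [rStat_flipRev hD hj1 hj2, sStat_flipRev hD hj1 hj2] at hjpos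
    have hji : n - j = i := by
      refine huniq (n - j) (Finset.mem_Icc.mpr ⟨by omega, by omega⟩) ⟨hjpos.2, hjpos.1⟩
    omega

lemma dyckRS_eq_image (n r s : ℕ) : dyckRS n s r = flipRev '' dyckRS n r s := by
  ext w
  constructor
  · intro hw
    exact ⟨flipRev w, mem_dyckRS_flipRev hw, flipRev_flipRev w⟩
  · rintro ⟨v, hv, rfl⟩
    exact mem_dyckRS_flipRev hv

lemma dyckRS_finite (n r s : ℕ) : (dyckRS n r s).Finite :=
  Set.Finite.subset (List.finite_length_eq Bool (2 * n)) (fun w hw => hw.1.1)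

end DyckAux

open DyckAux in
/-- For a prime `p ≥ 3` and `n ≥ 1`, `𝒟ₙᵖ` is the disjoint union of `𝒟ₙ^{1,p-1}` and
`𝒟ₙ^{p-1,1}`, these two sets are equinumerous, and `|𝒟ₙᵖ| = 2·|𝒟ₙ^{1,p-1}|`. -/
theorem dyck_L_prime_decomp (p : ℕ) (hp : p.Prime) (hp3 : 3 ≤ p) (n : ℕ) (hn : 1 ≤ n) :
    dyckL n p = dyckRS n 1 (p - 1) ∪ dyckRS n (p - 1) 1 ∧
    Disjoint (dyckRS n 1 (p - 1)) (dyckRS n (p - 1) 1) ∧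
    (dyckRS n 1 (p - 1)).ncard = (dyckRS n (p - 1) 1).ncard ∧
    (dyckL n p).ncard = 2 * (dyckRS n 1 (p - 1)).ncard := by
  have hunion : dyckL n p = dyckRS n 1 (p - 1) ∪ dyckRS n (p - 1) 1 := by
    ext w
    simp only [dyckL, dyckRS, Set.mem_setOf_eq, Set.mem_union]
    constructor
    · rintro ⟨hD, hL⟩
      have hf : ∀ i ∈ Finset.Icc 1 (n - 1),
          1 ≤ (rStat w i + sStat w i).choose (rStat w i) :=
        fun i _ => Nat.choose_pos (Nat.le_add_right _ _)
      obtain ⟨i₀, hi₀, hp₀, huniq1⟩ := prod_eq_prime hp hf hL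
      have hrpos : 0 < rStat w i₀ := by
        rcases Nat.eq_zero_or_pos (rStat w i₀) with h | h
        · rw [h, Nat.zero_add, Nat.choose_zero_right] at hp₀; omega
        · exact h
      have hspos : 0 < sStat w i₀ := by
        rcases Nat.eq_zero_or_pos (sStat w i₀) with h | h
        · rw [h, Nat.add_zero, Nat.choose_self] at hp₀; omega
        · exact h
      have huniq : ∀ j ∈ Finset.Icc 1 (n - 1),
          0 < rStat w j ∧ 0 < sStat w j → j = i₀ := by
        intro j hj ⟨ha, hb⟩
        by_contra hne
        have h1 := huniq1 j hj hne
        have h2 := le_choose (rStat w j + sStat w j) (rStat w j) ha (by omega)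
        omega
      rcases choose_eq_prime hp hrpos hspos hp₀ with ⟨h1, h2⟩ | ⟨h1, h2⟩
      · exact Or.inl ⟨hD, i₀, hi₀, ⟨hrpos, hspos⟩, h1, h2, huniq⟩
      · exact Or.inr ⟨hD, i₀, hi₀, ⟨hrpos, hspos⟩, h1, h2, huniq⟩
    · have hone : ∀ w : List Bool, ∀ i₀, (∀ j ∈ Finset.Icc 1 (n - 1),
          0 < rStat w j ∧ 0 < sStat w j → j = i₀) →
          ∀ j ∈ Finset.Icc 1 (n - 1), j ≠ i₀ →
          (rStat w j + sStat w j).choose (rStat w j) = 1 := by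
        intro w i₀ hu j hj hne
        have : rStat w j = 0 ∨ sStat w j = 0 := by
          by_contra hc
          push_neg at hc
          exact hne (hu j hj ⟨by omega, by omega⟩)
        rcases this with h | h
        · rw [h]; simp
        · rw [h]; simp
      rintro (⟨hD, i₀, hi₀, hpos, h1, h2, huniq⟩ | ⟨hD, i₀, hi₀, hpos, h1, h2, huniq⟩) <;>
        refine ⟨hD, ?_⟩ <;> rw [LStat] <;>
        rw [Finset.prod_eq_single i₀ (hone w i₀ huniq) (fun habs => absurd hi₀ habs)]
      · rw [h1, h2, show 1 + (p - 1) = p by omega, Nat.choose_one_right]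
      · rw [h1, h2, show p - 1 + 1 = p by omega,
          Nat.choose_symm (by omega : 1 ≤ p), Nat.choose_one_right]
  have hdisj : Disjoint (dyckRS n 1 (p - 1)) (dyckRS n (p - 1) 1) := by
    rw [Set.disjoint_left]
    rintro w ⟨hD, i₁, hi₁, hpos₁, hr₁, hs₁, hu₁⟩ ⟨hD', i₂, hi₂, hpos₂, hr₂, hs₂, hu₂⟩
    have h12 : i₂ = i₁ := hu₁ i₂ hi₂ hpos₂
    rw [h12] at hr₂
    omega
  have hcard : (dyckRS n 1 (p - 1)).ncard = (dyckRS n (p - 1) 1).ncard := by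
    rw [dyckRS_eq_image n 1 (p - 1), Set.ncard_image_of_injective _ flipRev_injective]
  refine ⟨hunion, hdisj, hcard, ?_⟩
  rw [hunion, Set.ncard_union_eq hdisj (dyckRS_finite n 1 (p - 1)) (dyckRS_finite n (p - 1) 1),
    ← hcard]
  omega
end
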